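/- arXiv:2501.12938 — 3 statements merged into one kernel-verified Lean document; each statement's English description precedes it below -/
import Mathlib

section
/- (Appendix D continuity claim, converse side.) Fix ε ∈ (0,1) and λ > 0. Then the limit as δ → 0⁺ (over δ ∈ (0, min(ε,λ))) of the minimum over p,q ∈ Δ satisfying d_TV(p,q) ≤ ε−δ and D(p‖P₁) ≤ λ−δ of D(q‖P₀) equals the minimum over p,q ∈ Δ satisfying d_TV(p,q) ≤ ε and D(p‖P₁) ≤ λ of D(q‖P₀). -/
open scoped BigOperators ENNReal Classical
open Filter

noncomputable section

/-- The set of probability distributions on a finite alphabet. -/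
def simplex (𝒳 : Type*) [Fintype 𝒳] : Set (𝒳 → ℝ) :=
  {p | (∀ x, 0 ≤ p x) ∧ ∑ x, p x = 1}

/-- Kullback–Leibler divergence, with values in `[0,∞]`. -/
def KL {𝒳 : Type*} [Fintype 𝒳] (p q : 𝒳 → ℝ) : ℝ≥0∞ :=
  if ∀ x, q x = 0 → p x = 0 then
    ENNReal.ofReal (∑ x, p x * Real.log (p x / q x))
  else ⊤

/-- KL ball of radius `r` around `p`. -/
def BKL {𝒳 : Type*} [Fintype 𝒳] (p : 𝒳 → ℝ) (r : ℝ) : Set (𝒳 → ℝ) :=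
  {q | q ∈ simplex 𝒳 ∧ KL q p ≤ ENNReal.ofReal r}

/-- Mixture `(1-a) p + a q`. -/
def mix {𝒳 : Type*} (a : ℝ) (p q : 𝒳 → ℝ) : 𝒳 → ℝ :=
  fun x => (1 - a) * p x + a * q x

/-- Binary KL divergence `D₂(ρ‖ε)`. -/
def D2 (ρ ε : ℝ) : ℝ≥0∞ :=
  KL (fun b : Bool => if b then ρ else 1 - ρ) (fun b : Bool => if b then ε else 1 - ε)

/-- Total variation distance. -/
def dTV {𝒳 : Type*} [Fintype 𝒳] (p q : 𝒳 → ℝ) : ℝ :=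
  (∑ x, |p x - q x|) / 2

/-- Empirical type of a string. -/
def typeOf {𝒳 : Type*} [Fintype 𝒳] [DecidableEq 𝒳] {n : ℕ} (x : Fin n → 𝒳) : 𝒳 → ℝ :=
  fun a => ((Finset.univ.filter fun i => x i = a).card : ℝ) / n

/-- i.i.d. probability of a string. -/
def iid {𝒳 : Type*} [Fintype 𝒳] (P : 𝒳 → ℝ) {n : ℕ} (x : Fin n → 𝒳) : ℝ :=
  ∏ i, P (x i)

/-- Probability of `z` under i.i.d. Bernoulli(ε). -/
def berW (ε : ℝ) {n : ℕ} (z : Fin n → Bool) : ℝ :=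
  ∏ i, if z i then ε else 1 - ε

/-- Hamming weight. -/
def wt {n : ℕ} (z : Fin n → Bool) : ℕ :=
  (Finset.univ.filter fun i => z i = true).card

/-- Probability of `z` under the uniform distribution on weight-⌈nε⌉ binary vectors. -/
def unifW (ε : ℝ) {n : ℕ} (z : Fin n → Bool) : ℝ :=
  if wt z = Nat.ceil ((n : ℝ) * ε) then
    (1 : ℝ) / ((Finset.univ.filter fun z' : Fin n → Bool => wt z' = Nat.ceil ((n : ℝ) * ε)).card : ℝ)
  else 0

/-- `liminf -(1/n) log E(n) ≥ l` (in the extended reals). -/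
def ExpLB (E : ℕ → ℝ) (l : ℝ) : Prop :=
  (l : EReal) ≤ Filter.liminf (fun n : ℕ => ((-(Real.log (E n)) / n : ℝ) : EReal)) Filter.atTop

/-- The doubly back-off minimum appearing in the strong contamination converse. -/
def Ksc2 {𝒳 : Type*} [Fintype 𝒳] (P0 P1 : 𝒳 → ℝ) (e t : ℝ) : ℝ≥0∞ :=
  ⨅ p ∈ simplex 𝒳, ⨅ q ∈ simplex 𝒳,
    ⨅ (_ : dTV p q ≤ e), ⨅ (_ : KL p P1 ≤ ENNReal.ofReal t), KL q P0

section Aux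

variable {𝒳 : Type*} [Fintype 𝒳]

/-- Real-valued KL sum. -/
def KLr (p q : 𝒳 → ℝ) : ℝ := ∑ x, p x * Real.log (p x / q x)

lemma KL_eq_ofReal (p q : 𝒳 → ℝ) (hq : ∀ x, 0 < q x) :
    KL p q = ENNReal.ofReal (KLr p q) := by
  rw [KL, if_pos fun x hx => absurd hx (hq x).ne']; rfl

lemma KLr_self (q : 𝒳 → ℝ) (hq : ∀ x, 0 < q x) : KLr q q = 0 := by
  unfold KLr
  refine Finset.sum_eq_zero fun x _ => ?_
  rw [div_self (hq x).ne', Real.log_one, mul_zero]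

lemma KLr_nonneg {p q : 𝒳 → ℝ} (hp : p ∈ simplex 𝒳) (hq : q ∈ simplex 𝒳)
    (hqpos : ∀ x, 0 < q x) : 0 ≤ KLr p q := by
  have key : ∀ x, p x - q x ≤ p x * Real.log (p x / q x) := by
    intro x
    rcases eq_or_lt_of_le (hp.1 x) with h | h
    · rw [← h]; simp; linarith [hqpos x]
    · have hlog : Real.log (q x / p x) ≤ q x / p x - 1 :=
        Real.log_le_sub_one_of_pos (div_pos (hqpos x) h)
      have hneg : Real.log (q x / p x) = - Real.log (p x / q x) := by
        rw [← Real.log_inv]; congr 1; field_simp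
      rw [hneg] at hlog
      have h2 := mul_le_mul_of_nonneg_left hlog h.le
      have h3 : p x * (q x / p x - 1) = q x - p x := by field_simp
      rw [h3] at h2; linarith
  calc (0:ℝ) = ∑ x, (p x - q x) := by rw [Finset.sum_sub_distrib, hp.2, hq.2]; ring
  _ ≤ _ := Finset.sum_le_sum fun x _ => key x

lemma convexOn_KLterm {c : ℝ} (hc : 0 < c) :
    ConvexOn ℝ (Set.Ici (0:ℝ)) (fun x => x * Real.log (x / c)) := by
  have h2 : ConvexOn ℝ (Set.Ici (0:ℝ)) (fun x => x * (-Real.log c)) := by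
    refine ⟨convex_Ici 0, fun x _ y _ a b _ _ _ => le_of_eq ?_⟩
    simp only [smul_eq_mul]; ring
  have h3 := Real.convexOn_mul_log.add h2
  convert h3 using 1
  · rfl
  funext x
  rcases eq_or_ne x 0 with rfl | hx
  · simp
  · simp only [Pi.add_apply]; rw [Real.log_div hx hc.ne']; ring

lemma KLr_mix_le {u v P : 𝒳 → ℝ} (hu : ∀ x, 0 ≤ u x) (hv : ∀ x, 0 ≤ v x)
    (hP : ∀ x, 0 < P x) {a : ℝ} (ha0 : 0 ≤ a) (ha1 : a ≤ 1) :
    KLr (mix a u v) P ≤ (1 - a) * KLr u P + a * KLr v P := by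
  unfold KLr
  rw [Finset.mul_sum, Finset.mul_sum, ← Finset.sum_add_distrib]
  refine Finset.sum_le_sum fun x _ => ?_
  have h := (convexOn_KLterm (hP x)).2 (Set.mem_Ici.2 (hu x)) (Set.mem_Ici.2 (hv x))
    (by linarith : (0:ℝ) ≤ 1 - a) ha0 (by ring)
  simpa [mix, smul_eq_mul] using h

lemma mix_mem_simplex {u v : 𝒳 → ℝ} (hu : u ∈ simplex 𝒳) (hv : v ∈ simplex 𝒳)
    {a : ℝ} (ha0 : 0 ≤ a) (ha1 : a ≤ 1) : mix a u v ∈ simplex 𝒳 := by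
  constructor
  · intro x
    have h1 := hu.1 x; have h2 := hv.1 x
    have : 0 ≤ (1 - a) * u x + a * v x := by nlinarith
    simpa [mix] using this
  · show ∑ x, ((1 - a) * u x + a * v x) = 1
    rw [Finset.sum_add_distrib, ← Finset.mul_sum, ← Finset.mul_sum, hu.2, hv.2]; ring

lemma dTV_mix (p q v : 𝒳 → ℝ) {a : ℝ} (ha1 : a ≤ 1) :
    dTV (mix a p v) (mix a q v) = (1 - a) * dTV p q := by
  have key : ∀ x : 𝒳, |mix a p v x - mix a q v x| = (1 - a) * |p x - q x| := by
    intro x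
    rw [show mix a p v x - mix a q v x = (1 - a) * (p x - q x) by simp [mix]; ring,
      abs_mul, abs_of_nonneg (by linarith : (0:ℝ) ≤ 1 - a)]
  unfold dTV
  rw [Finset.sum_congr rfl fun x _ => key x, ← Finset.mul_sum]
  ring

lemma dTV_nonneg (p q : 𝒳 → ℝ) : 0 ≤ dTV p q := by
  unfold dTV; positivity

lemma Ksc2_anti (P0 P1 : 𝒳 → ℝ) {e e' t t' : ℝ} (he : e' ≤ e) (ht : t' ≤ t) :
    Ksc2 P0 P1 e t ≤ Ksc2 P0 P1 e' t' := by
  refine le_iInf₂ fun p hp => le_iInf₂ fun q hq => le_iInf fun hd => le_iInf fun hk => ?_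
  exact iInf₂_le_of_le p hp <| iInf₂_le_of_le q hq <| iInf_le_of_le (hd.trans he) <|
    iInf_le _ (hk.trans (ENNReal.ofReal_le_ofReal ht))

end Aux

/-- **Appendix D continuity claim (converse side)**: as `δ → 0⁺` over
`δ ∈ (0, min ε λ)`, the minimum with budgets `ε-δ`, `λ-δ` tends to the minimum with
budgets `ε`, `λ`. -/



theorem appendixD_continuity_converse {𝒳 : Type*} [Fintype 𝒳] [Nonempty 𝒳]
    (P0 P1 : 𝒳 → ℝ) (hP0 : P0 ∈ simplex 𝒳) (hP1 : P1 ∈ simplex 𝒳)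
    (hfs0 : ∀ x, 0 < P0 x) (hfs1 : ∀ x, 0 < P1 x) (hne : P0 ≠ P1)
    {ε lam : ℝ} (hε : 0 < ε) (hε1 : ε < 1) (hlam : 0 < lam) :
    Filter.Tendsto (fun δ : ℝ => Ksc2 P0 P1 (ε - δ) (lam - δ))
      (nhdsWithin 0 (Set.Ioo 0 (min ε lam))) (nhds (Ksc2 P0 P1 ε lam)) := by
  have hμ : 0 < min ε lam := lt_min hε hlam
  rw [tendsto_order]
  constructor
  · intro b hb
    filter_upwards [self_mem_nhdsWithin] with δ hδ
    exact hb.trans_le (Ksc2_anti P0 P1 (by linarith [hδ.1]) (by linarith [hδ.1]))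
  · intro a ha
    simp only [Ksc2, iInf_lt_iff, exists_prop] at ha
    obtain ⟨p, hp, q, hq, hd, hk, hlt⟩ := ha
    rw [KL_eq_ofReal p P1 hfs1] at hk
    rw [KL_eq_ofReal q P0 hfs0] at hlt
    have hk' : KLr p P1 ≤ lam := (ENNReal.ofReal_le_ofReal_iff hlam.le).1 hk
    set μ := min ε lam with hμdef
    set K := KLr q P0 with hKdef
    set C := KLr P1 P0 with hCdef
    have hK0 : 0 ≤ K := KLr_nonneg hq hP0 hfs0
    have hC0 : 0 ≤ C := KLr_nonneg hP1 hP0 hfs0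
    have htend : Filter.Tendsto (fun δ : ℝ => ENNReal.ofReal (K + (δ / μ) * C))
        (nhds 0) (nhds (ENNReal.ofReal K)) := by
      refine (ENNReal.continuous_ofReal.tendsto K).comp ?_
      have hc : Continuous (fun δ : ℝ => K + (δ / μ) * C) := by continuity
      have := hc.tendsto 0
      simpa using this
    have hev : ∀ᶠ δ in nhds (0:ℝ), ENNReal.ofReal (K + (δ / μ) * C) < a :=
      htend.eventually_lt_const hlt
    filter_upwards [self_mem_nhdsWithin, nhdsWithin_le_nhds hev] with δ hδ hga
    obtain ⟨hδ0, hδμ⟩ := hδ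
    have hμε : μ ≤ ε := min_le_left _ _
    have hmulam : μ ≤ lam := min_le_right _ _
    set aδ := δ / μ with haδdef
    have haδ0 : 0 < aδ := div_pos hδ0 hμ
    have haδ1 : aδ < 1 := (div_lt_one hμ).2 hδμ
    have hδε : δ ≤ aδ * ε := by
      rw [haδdef, div_mul_eq_mul_div, le_div_iff₀ hμ]; nlinarith
    have hdlam : δ ≤ aδ * lam := by
      rw [haδdef, div_mul_eq_mul_div, le_div_iff₀ hμ]; nlinarith
    have hstep : Ksc2 P0 P1 (ε - δ) (lam - δ) ≤ KL (mix aδ q P1) P0 := by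
      refine iInf₂_le_of_le (mix aδ p P1) (mix_mem_simplex hp hP1 haδ0.le haδ1.le) ?_
      refine iInf₂_le_of_le (mix aδ q P1) (mix_mem_simplex hq hP1 haδ0.le haδ1.le) ?_
      refine iInf_le_of_le ?_ (iInf_le _ ?_)
      · rw [dTV_mix p q P1 haδ1.le]
        have h0 := dTV_nonneg p q
        nlinarith [mul_le_mul_of_nonneg_left hd (by linarith : (0:ℝ) ≤ 1 - aδ)]
      · rw [KL_eq_ofReal _ _ hfs1]
        refine ENNReal.ofReal_le_ofReal ?_
        calc KLr (mix aδ p P1) P1 ≤ (1 - aδ) * KLr p P1 + aδ * KLr P1 P1 :=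
              KLr_mix_le hp.1 hP1.1 hfs1 haδ0.le haδ1.le
        _ = (1 - aδ) * KLr p P1 := by rw [KLr_self P1 hfs1]; ring
        _ ≤ (1 - aδ) * lam := mul_le_mul_of_nonneg_left hk' (by linarith)
        _ ≤ lam - δ := by nlinarith
    refine hstep.trans_lt ?_
    rw [KL_eq_ofReal _ _ hfs0]
    refine lt_of_le_of_lt (ENNReal.ofReal_le_ofReal ?_) hga
    calc KLr (mix aδ q P1) P0 ≤ (1 - aδ) * K + aδ * C :=
          KLr_mix_le hq.1 hP1.1 hfs0 haδ0.le haδ1.le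
    _ ≤ K + (δ / μ) * C := by nlinarith


end
end

section
/- (Remark 2 comparison.) For any λ > 0 and any ε ∈ (0,1), the minimum over ρ ∈ [0,1] and q,v ∈ Δ satisfying D((1−ρ)q + ρv ‖ P₁) ≤ λ of D₂(ρ‖ε) + (1−ρ)·D(q‖P₀) is less than or equal to (1−ε) times the minimum over q,u ∈ Δ satisfying D((1−ε)q + εu ‖ P₁) ≤ λ of D(q‖P₀). -/
open scoped BigOperators ENNReal Classical
open Filter

noncomputable section

lemma KL_self {𝒳 : Type*} [Fintype 𝒳] (p : 𝒳 → ℝ) : KL p p = 0 := by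
  have : (∑ x, p x * Real.log (p x / p x)) = 0 := by
    refine Finset.sum_eq_zero fun x _ => ?_
    by_cases h : p x = 0
    · simp [h]
    · simp [div_self h]
  simp [KL, this]

/-- **Remark 2 comparison**: the memoryless-ingress exponent is at most the
fixed-weight-uniform-ingress exponent. -/
theorem remark2_comparison {𝒳 : Type*} [Fintype 𝒳] [Nonempty 𝒳]
    (P0 P1 : 𝒳 → ℝ) (hP0 : P0 ∈ simplex 𝒳) (hP1 : P1 ∈ simplex 𝒳)
    (hfs0 : ∀ x, 0 < P0 x) (hfs1 : ∀ x, 0 < P1 x) (hne : P0 ≠ P1)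
    {ε lam : ℝ} (hε : 0 < ε) (hε1 : ε < 1) (hlam : 0 < lam) :
    (⨅ ρ ∈ Set.Icc (0:ℝ) 1, ⨅ q ∈ simplex 𝒳, ⨅ v ∈ simplex 𝒳,
        ⨅ (_ : KL (mix ρ q v) P1 ≤ ENNReal.ofReal lam),
          D2 ρ ε + ENNReal.ofReal (1 - ρ) * KL q P0) ≤
      ENNReal.ofReal (1 - ε) *
        ⨅ q ∈ simplex 𝒳, ⨅ u ∈ simplex 𝒳,
          ⨅ (_ : KL (mix ε q u) P1 ≤ ENNReal.ofReal lam), KL q P0 := by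
  have hc0 : ENNReal.ofReal (1 - ε) ≠ 0 := by
    simp [ENNReal.ofReal_eq_zero]; linarith
  have hct : ENNReal.ofReal (1 - ε) ≠ ⊤ := ENNReal.ofReal_ne_top
  rw [ENNReal.mul_iInf_of_ne hc0 hct]
  refine le_iInf fun q => ?_
  rw [ENNReal.mul_iInf_of_ne hc0 hct]
  refine le_iInf fun hq => ?_
  rw [ENNReal.mul_iInf_of_ne hc0 hct]
  refine le_iInf fun u => ?_
  rw [ENNReal.mul_iInf_of_ne hc0 hct]
  refine le_iInf fun hu => ?_
  rw [ENNReal.mul_iInf_of_ne hc0 hct]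
  refine le_iInf fun hfeas => ?_
  have hεm : ε ∈ Set.Icc (0:ℝ) 1 := ⟨le_of_lt hε, le_of_lt hε1⟩
  refine le_trans ?_ (le_of_eq rfl)
  calc (⨅ ρ ∈ Set.Icc (0:ℝ) 1, ⨅ q ∈ simplex 𝒳, ⨅ v ∈ simplex 𝒳,
        ⨅ (_ : KL (mix ρ q v) P1 ≤ ENNReal.ofReal lam),
          D2 ρ ε + ENNReal.ofReal (1 - ρ) * KL q P0)
      ≤ D2 ε ε + ENNReal.ofReal (1 - ε) * KL q P0 := by
        refine le_trans (iInf_le _ ε) ?_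
        refine le_trans (iInf_le _ hεm) ?_
        refine le_trans (iInf_le _ q) ?_
        refine le_trans (iInf_le _ hq) ?_
        refine le_trans (iInf_le _ u) ?_
        refine le_trans (iInf_le _ hu) ?_
        exact iInf_le _ hfeas
    _ = ENNReal.ofReal (1 - ε) * KL q P0 := by
        rw [D2, KL_self, zero_add]

end
end

section
/- (Sanov consequence for tests on types, inequality (15) in the fixed-weight converse.) Let P₁ be a full-support distribution on a finite alphabet 𝒳 and fix λ > 2δ > 0. For each n, let g_n : Δ_n → [0,1] and define E_n = Σ_{q ∈ Δ_n} (1 − g_n(q)) · P_{X^n∼P₁^n}(P_{X^n} = q). Suppose there exists N such that for all n > N, −(1/n) log E_n ≥ λ − δ. Then for all sufficiently large n, every type q ∈ B_KL(P₁, λ−2δ) ∩ Δ_n satisfies 1 − g_n(q) ≤ 2^{−nδ/2}. -/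
open scoped BigOperators ENNReal Classical
open Filter

noncomputable section

/-- Kullback–Leibler divergence in bits (base-2 logarithm), with values in `[0,∞]`. -/
def KL2 {𝒳 : Type*} [Fintype 𝒳] (p q : 𝒳 → ℝ) : ℝ≥0∞ :=
  if ∀ x, q x = 0 → p x = 0 then
    ENNReal.ofReal (∑ x, p x * Real.logb 2 (p x / q x))
  else ⊤

set_option linter.unusedSectionVars false

namespace SanovAux

variable {𝒳 : Type*} [Fintype 𝒳] [DecidableEq 𝒳]

def cnt {n : ℕ} (x : Fin n → 𝒳) (a : 𝒳) : ℕ :=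
  (Finset.univ.filter fun i => x i = a).card

lemma sum_cnt {n : ℕ} (x : Fin n → 𝒳) : ∑ a, cnt x a = n := by
  have h := Finset.card_eq_sum_card_fiberwise
    (f := x) (s := Finset.univ) (t := Finset.univ) (fun i _ => Finset.mem_univ (x i))
  simpa [cnt] using h.symm

lemma typeOf_apply {n : ℕ} (x : Fin n → 𝒳) (a : 𝒳) :
    typeOf x a = (cnt x a : ℝ) / n := rfl

lemma cnt_eq_of_typeOf_eq {n : ℕ} (hn : 0 < n) {x y : Fin n → 𝒳}
    (h : typeOf x = typeOf y) (a : 𝒳) : cnt x a = cnt y a := by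
  have h1 := congrFun h a
  rw [typeOf_apply, typeOf_apply] at h1
  have hn' : (n:ℝ) ≠ 0 := by positivity
  field_simp at h1
  exact_mod_cast h1

lemma iid_eq_prod {n : ℕ} (P : 𝒳 → ℝ) (x : Fin n → 𝒳) :
    iid P x = ∏ a, P a ^ cnt x a := by
  rw [iid, ← Finset.prod_fiberwise_of_maps_to (g := x) (t := Finset.univ)
    (fun i _ => Finset.mem_univ (x i)) (fun i => P (x i))]
  refine Finset.prod_congr rfl fun a _ => ?_
  rw [show (∏ i ∈ Finset.univ.filter fun i => x i = a, P (x i))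
      = ∏ _i ∈ Finset.univ.filter fun i => x i = a, P a from
    Finset.prod_congr rfl fun i hi => by rw [(Finset.mem_filter.mp hi).2]]
  rw [Finset.prod_const, cnt]

lemma cnt_comp_perm {n : ℕ} (x : Fin n → 𝒳) (σ : Equiv.Perm (Fin n)) (a : 𝒳) :
    cnt (fun i => x (σ i)) a = cnt x a := by
  unfold cnt
  refine Finset.card_bij (fun i _ => σ i) ?_ ?_ ?_
  · intro i hi
    simpa using (Finset.mem_filter.mp hi).2
  · intro i _ j _ hij
    exact σ.injective hij
  · intro j hj
    refine ⟨σ.symm j, ?_, by simp⟩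
    simp only [Finset.mem_filter, Finset.mem_univ, true_and] at hj ⊢
    simpa using hj

lemma typeOf_comp_perm {n : ℕ} (x : Fin n → 𝒳) (σ : Equiv.Perm (Fin n)) :
    typeOf (fun i => x (σ i)) = typeOf x := by
  funext a
  rw [typeOf_apply, typeOf_apply, cnt_comp_perm]

end SanovAux
namespace SanovAux

lemma card_fiber_le {𝒳 : Type*} [Fintype 𝒳] [DecidableEq 𝒳] {n : ℕ} (x₀ y : Fin n → 𝒳)
    (hy : ∀ a, cnt y a = cnt x₀ a) :
    (Finset.univ.filter fun σ : Equiv.Perm (Fin n) => (fun i => x₀ (σ i)) = y).card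
      ≤ ∏ a, (cnt x₀ a).factorial := by
  classical
  rw [← Fintype.card_subtype]
  have key : Fintype.card {σ : Equiv.Perm (Fin n) // (fun i => x₀ (σ i)) = y}
      ≤ Fintype.card (∀ a : 𝒳, {i // y i = a} ↪ {i // x₀ i = a}) := by
    apply Fintype.card_le_of_injective
      (fun σ => fun a =>
        ⟨fun i => ⟨σ.1 i.1, by rw [congrFun σ.2 i.1]; exact i.2⟩,
         fun i j hij => Subtype.ext (σ.1.injective (congrArg Subtype.val hij))⟩)
    intro σ τ h
    refine Subtype.ext (Equiv.ext fun i => ?_)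
    have h2 := congrFun h (y i)
    have h3 := congrFun (congrArg (fun (e : {i' // y i' = y i} ↪ {i' // x₀ i' = y i}) => e.toFun) h2)
      ⟨i, rfl⟩
    exact congrArg Subtype.val h3
  calc Fintype.card {σ : Equiv.Perm (Fin n) // (fun i => x₀ (σ i)) = y}
      ≤ Fintype.card (∀ a : 𝒳, {i // y i = a} ↪ {i // x₀ i = a}) := key
    _ = ∏ a, Fintype.card ({i // y i = a} ↪ {i // x₀ i = a}) := Fintype.card_pi
    _ = ∏ a, (cnt x₀ a).factorial := by
        refine Finset.prod_congr rfl fun a _ => ?_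
        rw [Fintype.card_embedding_eq]
        rw [Fintype.card_subtype, Fintype.card_subtype]
        show (cnt x₀ a).descFactorial (cnt y a) = _
        rw [hy a, Nat.descFactorial_self]

lemma card_type_mul_le {𝒳 : Type*} [Fintype 𝒳] [DecidableEq 𝒳] {n : ℕ} (hn : 0 < n)
    (x₀ : Fin n → 𝒳) :
    n.factorial ≤
      (Finset.univ.filter fun y : Fin n → 𝒳 => typeOf y = typeOf x₀).card
        * ∏ a, (cnt x₀ a).factorial := by
  classical
  set T := Finset.univ.filter fun y : Fin n → 𝒳 => typeOf y = typeOf x₀ with hT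
  have hmaps : ∀ σ : Equiv.Perm (Fin n), σ ∈ Finset.univ → (fun i => x₀ (σ i)) ∈ T := by
    intro σ _
    rw [hT, Finset.mem_filter]
    exact ⟨Finset.mem_univ _, typeOf_comp_perm x₀ σ⟩
  have hcard := Finset.card_eq_sum_card_fiberwise hmaps
  have huniv : (Finset.univ : Finset (Equiv.Perm (Fin n))).card = n.factorial := by
    rw [Finset.card_univ, Fintype.card_perm, Fintype.card_fin]
  rw [huniv] at hcard
  rw [hcard]
  have hbound : ∀ y ∈ T,
      (Finset.univ.filter fun σ : Equiv.Perm (Fin n) => (fun i => x₀ (σ i)) = y).card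
        ≤ ∏ a, (cnt x₀ a).factorial := by
    intro y hy
    apply card_fiber_le
    intro a
    exact cnt_eq_of_typeOf_eq hn (Finset.mem_filter.mp hy).2 a
  calc ∑ y ∈ T, (Finset.univ.filter fun σ : Equiv.Perm (Fin n) => (fun i => x₀ (σ i)) = y).card
      ≤ T.card * ∏ a, (cnt x₀ a).factorial := by
        have := Finset.sum_le_card_nsmul T _ _ hbound
        simpa [smul_eq_mul] using this

end SanovAux
namespace SanovAux

lemma pow_succ_le_exp_mul (n : ℕ) : ((n:ℝ)+1)^n ≤ (n:ℝ)^n * Real.exp 1 := by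
  rcases Nat.eq_zero_or_pos n with h | h
  · subst h; simpa using Real.one_le_exp (by norm_num)
  · have hn : (0:ℝ) < n := by exact_mod_cast h
    have h1 : (n:ℝ)+1 ≤ (n:ℝ) * Real.exp (1/(n:ℝ)) := by
      have h0 := Real.add_one_le_exp (1/(n:ℝ))
      have := mul_le_mul_of_nonneg_left h0 (le_of_lt hn)
      calc (n:ℝ)+1 = (n:ℝ) * (1/(n:ℝ) + 1) := by field_simp; ring
        _ ≤ (n:ℝ) * Real.exp (1/(n:ℝ)) := this
    calc ((n:ℝ)+1)^n ≤ ((n:ℝ) * Real.exp (1/(n:ℝ)))^n :=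
          pow_le_pow_left₀ (by positivity) h1 n
      _ = (n:ℝ)^n * Real.exp (1/(n:ℝ))^n := mul_pow _ _ n
      _ = (n:ℝ)^n * Real.exp 1 := by
          rw [← Real.exp_nat_mul]
          congr 1
          field_simp

lemma factorial_lower (n : ℕ) : (n:ℝ)^n * Real.exp (-(n:ℝ)) ≤ n.factorial := by
  induction n with
  | zero => simp
  | succ n ih =>
    have e1 : Real.exp (-((n:ℝ)+1)) = Real.exp (-(n:ℝ)) * Real.exp (-1) := by
      rw [← Real.exp_add]; ring_nf
    have e2 : Real.exp 1 * Real.exp (-1) = 1 := by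
      rw [← Real.exp_add]; norm_num
    have key : ((n:ℝ)+1)^(n+1) * Real.exp (-((n:ℝ)+1))
        ≤ ((n:ℝ)+1) * ((n:ℝ)^n * Real.exp (-(n:ℝ))) := by
      have h2 : ((n:ℝ)+1)^n * (Real.exp (-(n:ℝ)) * Real.exp (-1))
          ≤ ((n:ℝ)^n * Real.exp 1) * (Real.exp (-(n:ℝ)) * Real.exp (-1)) :=
        mul_le_mul_of_nonneg_right (pow_succ_le_exp_mul n) (by positivity)
      calc ((n:ℝ)+1)^(n+1) * Real.exp (-((n:ℝ)+1))
          = ((n:ℝ)+1) * (((n:ℝ)+1)^n * (Real.exp (-(n:ℝ)) * Real.exp (-1))) := by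
            rw [e1, pow_succ]; ring
        _ ≤ ((n:ℝ)+1) * (((n:ℝ)^n * Real.exp 1) * (Real.exp (-(n:ℝ)) * Real.exp (-1))) :=
            mul_le_mul_of_nonneg_left h2 (by positivity)
        _ = ((n:ℝ)+1) * ((n:ℝ)^n * Real.exp (-(n:ℝ)) * (Real.exp 1 * Real.exp (-1))) := by ring
        _ = ((n:ℝ)+1) * ((n:ℝ)^n * Real.exp (-(n:ℝ))) := by rw [e2, mul_one]
    have final : ((n:ℝ)+1)^(n+1) * Real.exp (-((n:ℝ)+1)) ≤ ((n+1).factorial : ℝ) := by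
      calc ((n:ℝ)+1)^(n+1) * Real.exp (-((n:ℝ)+1))
          ≤ ((n:ℝ)+1) * ((n:ℝ)^n * Real.exp (-(n:ℝ))) := key
        _ ≤ ((n:ℝ)+1) * n.factorial := mul_le_mul_of_nonneg_left ih (by positivity)
        _ = ((n+1).factorial : ℝ) := by rw [Nat.factorial_succ]; push_cast; ring
    calc ((n+1:ℕ):ℝ)^(n+1) * Real.exp (-((n+1:ℕ):ℝ))
        = ((n:ℝ)+1)^(n+1) * Real.exp (-((n:ℝ)+1)) := by push_cast; ring_nf
      _ ≤ ((n+1).factorial : ℝ) := final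

lemma exp_mul_pow_le (k : ℕ) (hk : 0 < k) :
    Real.exp 1 * (k:ℝ)^(k+1) ≤ ((k:ℝ)+1)^(k+1) := by
  have hkR : (0:ℝ) < k := by exact_mod_cast hk
  have h1 : Real.exp (1/((k:ℝ)+1)) ≤ ((k:ℝ)+1)/(k:ℝ) := by
    have h2 := Real.add_one_le_exp (-(1/((k:ℝ)+1)))
    have h3 : (k:ℝ)/((k:ℝ)+1) ≤ Real.exp (-(1/((k:ℝ)+1))) := by
      calc (k:ℝ)/((k:ℝ)+1) = -(1/((k:ℝ)+1)) + 1 := by field_simp; ring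
        _ ≤ _ := h2
    have h4 : (0:ℝ) < (k:ℝ)/((k:ℝ)+1) := by positivity
    have h5 : Real.exp (1/((k:ℝ)+1)) * ((k:ℝ)/((k:ℝ)+1))
        ≤ Real.exp (1/((k:ℝ)+1)) * Real.exp (-(1/((k:ℝ)+1))) :=
      mul_le_mul_of_nonneg_left h3 (Real.exp_pos _).le
    rw [← Real.exp_add] at h5
    simp only [add_neg_cancel, Real.exp_zero] at h5
    rw [← le_div_iff₀ h4] at h5
    calc Real.exp (1/((k:ℝ)+1)) ≤ 1 / ((k:ℝ)/((k:ℝ)+1)) := h5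
      _ = ((k:ℝ)+1)/(k:ℝ) := one_div_div _ _
  have h5 : Real.exp 1 ≤ (((k:ℝ)+1)/(k:ℝ))^(k+1) := by
    calc Real.exp 1 = Real.exp (1/((k:ℝ)+1))^(k+1) := by
          rw [← Real.exp_nat_mul]; congr 1; push_cast; field_simp
      _ ≤ (((k:ℝ)+1)/(k:ℝ))^(k+1) := pow_le_pow_left₀ (Real.exp_pos _).le h1 _
  calc Real.exp 1 * (k:ℝ)^(k+1) ≤ (((k:ℝ)+1)/(k:ℝ))^(k+1) * (k:ℝ)^(k+1) :=
        mul_le_mul_of_nonneg_right h5 (by positivity)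
    _ = ((k:ℝ)+1)^(k+1) := by rw [div_pow, div_mul_cancel₀]; positivity

lemma factorial_upper_aux : ∀ k : ℕ, 1 ≤ k → (k.factorial : ℝ) ≤ (k:ℝ)^(k+1) * Real.exp (1 - (k:ℝ)) := by
  intro k
  induction k with
  | zero => intro h; omega
  | succ k ih =>
    intro _
    rcases Nat.eq_zero_or_pos k with h | hk
    · subst h; norm_num
    · have ihk := ih hk
      have e1 : Real.exp (1 - ((k:ℝ)+1)) = Real.exp (-1) * Real.exp (1-(k:ℝ)) := by
        rw [← Real.exp_add]; ring_nf
      have e2 : Real.exp (-1) * Real.exp 1 = 1 := by rw [← Real.exp_add]; norm_num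
      have hpow : (k:ℝ)^(k+1) ≤ Real.exp (-1) * ((k:ℝ)+1)^(k+1) := by
        have h6 := exp_mul_pow_le k hk
        have := mul_le_mul_of_nonneg_left h6 (Real.exp_pos (-1)).le
        calc (k:ℝ)^(k+1) = 1 * (k:ℝ)^(k+1) := (one_mul _).symm
          _ = Real.exp (-1) * (Real.exp 1 * (k:ℝ)^(k+1)) := by rw [← mul_assoc, e2]
          _ ≤ Real.exp (-1) * ((k:ℝ)+1)^(k+1) := this
      have step : ((k+1:ℕ).factorial : ℝ) = ((k:ℝ)+1) * k.factorial := by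
        rw [Nat.factorial_succ]; push_cast; ring
      have final : ((k+1:ℕ).factorial : ℝ) ≤ ((k:ℝ)+1)^(k+1+1) * Real.exp (1 - ((k:ℝ)+1)) := by
        rw [step]
        calc ((k:ℝ)+1) * (k.factorial:ℝ)
            ≤ ((k:ℝ)+1) * ((k:ℝ)^(k+1) * Real.exp (1-(k:ℝ))) :=
              mul_le_mul_of_nonneg_left ihk (by positivity)
          _ ≤ ((k:ℝ)+1) * ((Real.exp (-1) * ((k:ℝ)+1)^(k+1)) * Real.exp (1-(k:ℝ))) := by
              apply mul_le_mul_of_nonneg_left _ (by positivity)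
              exact mul_le_mul_of_nonneg_right hpow (Real.exp_pos _).le
          _ = ((k:ℝ)+1)^(k+1+1) * (Real.exp (-1) * Real.exp (1-(k:ℝ))) := by
              rw [pow_succ]; ring
          _ = ((k:ℝ)+1)^(k+1+1) * Real.exp (1 - ((k:ℝ)+1)) := by rw [← e1]
      calc ((k+1:ℕ).factorial : ℝ) ≤ ((k:ℝ)+1)^(k+1+1) * Real.exp (1 - ((k:ℝ)+1)) := final
        _ = ((k+1:ℕ):ℝ)^(k+1+1) * Real.exp (1 - ((k+1:ℕ):ℝ)) := by push_cast; ring_nf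

lemma factorial_le_bound (k n : ℕ) (hkn : k ≤ n) (hn : 1 ≤ n) :
    (k.factorial : ℝ) ≤ (k:ℝ)^k * n * Real.exp (1 - (k:ℝ)) := by
  rcases Nat.eq_zero_or_pos k with h | hk
  · subst h
    simp only [Nat.factorial_zero, Nat.cast_zero, pow_zero, one_mul, Nat.cast_one, sub_zero]
    have h1 : (1:ℝ) ≤ n := by exact_mod_cast hn
    have h2 : (1:ℝ) ≤ Real.exp 1 := Real.one_le_exp (by norm_num)
    nlinarith
  · have := factorial_upper_aux k hk
    calc (k.factorial : ℝ) ≤ (k:ℝ)^(k+1) * Real.exp (1 - (k:ℝ)) := this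
      _ = (k:ℝ)^k * (k:ℝ) * Real.exp (1 - (k:ℝ)) := by rw [pow_succ]
      _ ≤ (k:ℝ)^k * (n:ℝ) * Real.exp (1 - (k:ℝ)) := by
          apply mul_le_mul_of_nonneg_right _ (Real.exp_pos _).le
          exact mul_le_mul_of_nonneg_left (by exact_mod_cast hkn) (by positivity)

end SanovAux
namespace SanovAux

lemma cnt_le {𝒳 : Type*} [Fintype 𝒳] [DecidableEq 𝒳] {n : ℕ} (x : Fin n → 𝒳) (a : 𝒳) :
    cnt x a ≤ n := by
  conv_rhs => rw [← sum_cnt x]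
  exact Finset.single_le_sum (fun _ _ => Nat.zero_le _) (Finset.mem_univ a)

lemma pow_self_pos (k : ℕ) : (0:ℝ) < (k:ℝ)^k := by
  rcases Nat.eq_zero_or_pos k with h | h
  · subst h; norm_num
  · have : (0:ℝ) < k := by exact_mod_cast h
    positivity

lemma prod_factorial_le {𝒳 : Type*} [Fintype 𝒳] [DecidableEq 𝒳] {n : ℕ} (hn : 1 ≤ n)
    (x₀ : Fin n → 𝒳) :
    ∏ a, ((cnt x₀ a).factorial : ℝ) ≤
      (∏ a, ((cnt x₀ a):ℝ)^(cnt x₀ a)) * (n:ℝ)^(Fintype.card 𝒳)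
        * Real.exp ((Fintype.card 𝒳 : ℝ) - n) := by
  have hnR : (0:ℝ) < n := by exact_mod_cast hn
  have step : ∏ a, ((cnt x₀ a).factorial : ℝ) ≤
      ∏ a, (((cnt x₀ a):ℝ)^(cnt x₀ a) * n * Real.exp (1 - (cnt x₀ a : ℝ))) := by
    apply Finset.prod_le_prod (fun a _ => by positivity)
    intro a _
    exact factorial_le_bound (cnt x₀ a) n (cnt_le x₀ a) hn
  refine step.trans (le_of_eq ?_)
  rw [show (∏ a : 𝒳, (((cnt x₀ a):ℝ)^(cnt x₀ a) * n * Real.exp (1 - (cnt x₀ a : ℝ))))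
      = (∏ a : 𝒳, ((cnt x₀ a):ℝ)^(cnt x₀ a)) * (∏ _a : 𝒳, (n:ℝ))
        * (∏ a : 𝒳, Real.exp (1 - (cnt x₀ a : ℝ))) from by
    rw [← Finset.prod_mul_distrib, ← Finset.prod_mul_distrib]]
  congr 1
  · congr 1
    rw [Finset.prod_const, Finset.card_univ]
  · rw [← Real.exp_sum]
    congr 1
    rw [Finset.sum_sub_distrib, Finset.sum_const, Finset.card_univ]
    have hsum : ∑ a, ((cnt x₀ a : ℕ) : ℝ) = (n : ℝ) := by
      rw [← Nat.cast_sum]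
      exact_mod_cast congrArg (Nat.cast : ℕ → ℝ) (sum_cnt x₀)
    rw [hsum]
    simp

/-- The per-letter exponent identity. -/
lemma exp_eq_prod {𝒳 : Type*} [Fintype 𝒳] [DecidableEq 𝒳] {n : ℕ} (hn : 0 < n)
    (P1 : 𝒳 → ℝ) (hfs1 : ∀ x, 0 < P1 x) (x₀ : Fin n → 𝒳) :
    Real.exp (-((n:ℝ) * (∑ a, typeOf x₀ a * Real.logb 2 (typeOf x₀ a / P1 a))) * Real.log 2)
      = ∏ a, (((n:ℝ) * P1 a)^(cnt x₀ a) / ((cnt x₀ a):ℝ)^(cnt x₀ a)) := by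
  have hnR : (0:ℝ) < n := by exact_mod_cast hn
  have hl2 : Real.log 2 ≠ 0 := ne_of_gt (Real.log_pos (by norm_num))
  have hterm : ∀ a : 𝒳,
      (n:ℝ) * (typeOf x₀ a * Real.logb 2 (typeOf x₀ a / P1 a)) * Real.log 2
        = (cnt x₀ a : ℝ) * Real.log ((cnt x₀ a : ℝ) / ((n:ℝ) * P1 a)) := by
    intro a
    rcases Nat.eq_zero_or_pos (cnt x₀ a) with h | h
    · rw [typeOf_apply, h]
      simp
    · rw [typeOf_apply, Real.logb, div_div]
      field_simp
  have hsum : (n:ℝ) * (∑ a, typeOf x₀ a * Real.logb 2 (typeOf x₀ a / P1 a)) * Real.log 2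
      = ∑ a, (n:ℝ) * (typeOf x₀ a * Real.logb 2 (typeOf x₀ a / P1 a)) * Real.log 2 := by
    rw [Finset.mul_sum, Finset.sum_mul]
  have h1 : -((n:ℝ) * (∑ a, typeOf x₀ a * Real.logb 2 (typeOf x₀ a / P1 a))) * Real.log 2
      = ∑ a, -((cnt x₀ a : ℝ) * Real.log ((cnt x₀ a : ℝ) / ((n:ℝ) * P1 a))) := by
    rw [neg_mul, hsum, ← Finset.sum_neg_distrib]
    exact Finset.sum_congr rfl fun a _ => congrArg Neg.neg (hterm a)
  rw [h1, Real.exp_sum]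
  refine Finset.prod_congr rfl fun a _ => ?_
  rcases Nat.eq_zero_or_pos (cnt x₀ a) with h | h
  · rw [h]; simp
  · have hk : (0:ℝ) < (cnt x₀ a : ℝ) := by exact_mod_cast h
    have hc : (0:ℝ) < ((n:ℝ) * P1 a) / (cnt x₀ a : ℝ) := by
      have := hfs1 a; positivity
    have hlog : Real.log (((n:ℝ) * P1 a) / (cnt x₀ a : ℝ))
        = - Real.log ((cnt x₀ a : ℝ) / ((n:ℝ) * P1 a)) := by
      rw [← Real.log_inv, inv_div]
    have e1 : -((cnt x₀ a : ℝ) * Real.log ((cnt x₀ a : ℝ) / ((n:ℝ) * P1 a)))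
        = (cnt x₀ a : ℕ) * Real.log (((n:ℝ) * P1 a) / (cnt x₀ a : ℝ)) := by
      rw [hlog]
      push_cast
      ring
    rw [e1, Real.exp_nat_mul, Real.exp_log hc, div_pow]
lemma main_lower {𝒳 : Type*} [Fintype 𝒳] [DecidableEq 𝒳] {n : ℕ} (hn : 0 < n)
    (P1 : 𝒳 → ℝ) (hfs1 : ∀ x, 0 < P1 x) (x₀ : Fin n → 𝒳) :
    Real.exp (-((n:ℝ) * (∑ a, typeOf x₀ a * Real.logb 2 (typeOf x₀ a / P1 a))) * Real.log 2)
      ≤ (Real.exp 1 * n)^(Fintype.card 𝒳) *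
        (((Finset.univ.filter fun y : Fin n → 𝒳 => typeOf y = typeOf x₀).card : ℝ)
          * ∏ a, P1 a ^ cnt x₀ a) := by
  classical
  have hnR : (0:ℝ) < n := by exact_mod_cast hn
  set m := Fintype.card 𝒳 with hm
  set W := ∏ a, ((cnt x₀ a : ℝ))^(cnt x₀ a) with hWdef
  set Q := ∏ a, P1 a ^ (cnt x₀ a) with hQdef
  set K := ∏ a, ((cnt x₀ a).factorial : ℝ) with hKdef
  set Tc := (((Finset.univ.filter fun y : Fin n → 𝒳 => typeOf y = typeOf x₀).card : ℕ) : ℝ) with hTcdef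
  have hW : 0 < W := Finset.prod_pos fun a _ => pow_self_pos _
  have hK : 0 < K := Finset.prod_pos fun a _ => by exact_mod_cast Nat.factorial_pos _
  have hQ : (0:ℝ) ≤ Q := Finset.prod_nonneg fun a _ => pow_nonneg (hfs1 a).le _
  rw [exp_eq_prod hn P1 hfs1 x₀]
  set R := ∏ a, (((n:ℝ) * P1 a)^(cnt x₀ a) / ((cnt x₀ a : ℝ))^(cnt x₀ a)) with hRdef
  have hR : (0:ℝ) ≤ R :=
    Finset.prod_nonneg fun a _ =>
      div_nonneg (pow_nonneg (mul_nonneg hnR.le (hfs1 a).le) _) (pow_self_pos _).le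
  have hRW : R * W = (n:ℝ)^n * Q := by
    rw [hRdef, hWdef, ← Finset.prod_mul_distrib]
    have hterm : ∀ a:𝒳, ((n:ℝ)*P1 a)^(cnt x₀ a)/((cnt x₀ a:ℝ))^(cnt x₀ a)
        * ((cnt x₀ a:ℝ))^(cnt x₀ a) = (n:ℝ)^(cnt x₀ a) * P1 a^(cnt x₀ a) := fun a => by
      rw [div_mul_cancel₀ _ (ne_of_gt (pow_self_pos (cnt x₀ a))), mul_pow]
    rw [Finset.prod_congr rfl (fun a _ => hterm a), Finset.prod_mul_distrib,
      Finset.prod_pow_eq_pow_sum, sum_cnt]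
  have hKW : K ≤ W * (n:ℝ)^m * Real.exp ((m:ℝ) - n) := prod_factorial_le hn x₀
  have hTK : ((n.factorial : ℕ):ℝ) ≤ Tc * K := by
    rw [hTcdef, hKdef]
    have := card_type_mul_le hn x₀
    push_cast
    exact_mod_cast this
  have hnn : (n:ℝ)^n * Real.exp (-(n:ℝ)) ≤ (n.factorial : ℝ) := factorial_lower n
  refine le_of_mul_le_mul_right ?_ hK
  have hexpm : (Real.exp 1)^m = Real.exp (m:ℝ) := by
    rw [← Real.exp_nat_mul, mul_one]
  have hexpsplit : Real.exp ((m:ℝ) - (n:ℝ)) = Real.exp (m:ℝ) * Real.exp (-(n:ℝ)) := by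
    rw [← Real.exp_add]; ring_nf
  calc R * K ≤ R * (W * (n:ℝ)^m * Real.exp ((m:ℝ) - n)) := mul_le_mul_of_nonneg_left hKW hR
    _ = (R * W) * (n:ℝ)^m * Real.exp ((m:ℝ)-n) := by ring
    _ = (n:ℝ)^n * Q * (n:ℝ)^m * Real.exp ((m:ℝ)-n) := by rw [hRW]
    _ = (Real.exp 1 * n)^m * (((n:ℝ)^n * Real.exp (-(n:ℝ))) * Q) := by
        rw [mul_pow, hexpm, hexpsplit]; ring
    _ ≤ (Real.exp 1 * n)^m * ((n.factorial : ℝ) * Q) := by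
        apply mul_le_mul_of_nonneg_left _ (by positivity)
        exact mul_le_mul_of_nonneg_right hnn hQ
    _ ≤ (Real.exp 1 * n)^m * ((Tc * K) * Q) := by
        apply mul_le_mul_of_nonneg_left _ (by positivity)
        exact mul_le_mul_of_nonneg_right hTK hQ
    _ = (Real.exp 1 * n)^m * (Tc * Q) * K := by ring

lemma sum_lower {𝒳 : Type*} [Fintype 𝒳] [DecidableEq 𝒳] {n : ℕ} (hn : 0 < n)
    (P1 : 𝒳 → ℝ) (hfs1 : ∀ x, 0 < P1 x) (g : (𝒳 → ℝ) → ℝ)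
    (hg : ∀ x : Fin n → 𝒳, g (typeOf x) ∈ Set.Icc (0:ℝ) 1) (x₀ : Fin n → 𝒳) :
    (1 - g (typeOf x₀)) *
      ((((Finset.univ.filter fun y : Fin n → 𝒳 => typeOf y = typeOf x₀).card : ℕ) : ℝ)
        * ∏ a, P1 a ^ cnt x₀ a)
      ≤ ∑ x : Fin n → 𝒳, iid P1 x * (1 - g (typeOf x)) := by
  classical
  set T := Finset.univ.filter fun y : Fin n → 𝒳 => typeOf y = typeOf x₀ with hT
  have hterm : ∀ x : Fin n → 𝒳, (0:ℝ) ≤ iid P1 x * (1 - g (typeOf x)) := by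
    intro x
    apply mul_nonneg
    · exact Finset.prod_nonneg fun i _ => (hfs1 _).le
    · have := (hg x).2; linarith
  have hsub : ∑ x ∈ T, iid P1 x * (1 - g (typeOf x))
      ≤ ∑ x : Fin n → 𝒳, iid P1 x * (1 - g (typeOf x)) :=
    Finset.sum_le_sum_of_subset_of_nonneg (Finset.filter_subset _ _)
      (fun x _ _ => hterm x)
  refine le_trans (le_of_eq ?_) hsub
  have heq : ∀ x ∈ T, iid P1 x * (1 - g (typeOf x))
      = (∏ a, P1 a ^ cnt x₀ a) * (1 - g (typeOf x₀)) := by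
    intro x hx
    have htx : typeOf x = typeOf x₀ := (Finset.mem_filter.mp hx).2
    rw [htx, iid_eq_prod]
    congr 1
    exact Finset.prod_congr rfl fun a _ => by rw [cnt_eq_of_typeOf_eq hn htx a]
  rw [Finset.sum_congr rfl heq, Finset.sum_const, nsmul_eq_mul]
  ring

lemma growth {m : ℕ} {ε : ℝ} (hε : 0 < ε) {n : ℕ} (hn : 1 ≤ n)
    (hbig : ((3 * m / ε)^2 : ℝ) ≤ n) :
    (Real.exp 1 * n)^m ≤ Real.exp (ε * n) := by
  have hnR : (1:ℝ) ≤ n := by exact_mod_cast hn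
  have hnpos : (0:ℝ) < n := by linarith
  have hen : (0:ℝ) < Real.exp 1 * n := by positivity
  rw [← Real.log_le_iff_le_exp (by positivity)]
  rw [Real.log_pow, Real.log_mul (Real.exp_pos 1).ne' hnpos.ne', Real.log_exp]
  have hsq : (1:ℝ) ≤ Real.sqrt n := by
    rw [show (1:ℝ) = Real.sqrt 1 from (Real.sqrt_one).symm]
    exact Real.sqrt_le_sqrt hnR
  have hlog : Real.log n ≤ 2 * Real.sqrt n := by
    have h1 : Real.log n = 2 * Real.log (Real.sqrt n) := by
      rw [Real.log_sqrt hnpos.le]; ring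
    have h2 : Real.log (Real.sqrt n) ≤ Real.sqrt n - 1 :=
      Real.log_le_sub_one_of_pos (by linarith)
    rw [h1]; linarith
  have hstep1 : (m:ℝ) * (1 + Real.log n) ≤ 3 * m * Real.sqrt n := by
    have h3 : (1:ℝ) + Real.log n ≤ 3 * Real.sqrt n := by linarith
    calc (m:ℝ) * (1 + Real.log n) ≤ (m:ℝ) * (3 * Real.sqrt n) :=
          mul_le_mul_of_nonneg_left h3 (Nat.cast_nonneg m)
      _ = 3 * m * Real.sqrt n := by ring
  have hsqrtbig : 3 * (m:ℝ) / ε ≤ Real.sqrt n := by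
    have := Real.sqrt_le_sqrt hbig
    rwa [Real.sqrt_sq (by positivity)] at this
  have hstep2 : 3 * (m:ℝ) * Real.sqrt n ≤ ε * n := by
    have h4 : 3 * (m:ℝ) ≤ ε * Real.sqrt n := by
      have := mul_le_mul_of_nonneg_left hsqrtbig hε.le
      calc 3 * (m:ℝ) = ε * (3 * m / ε) := by field_simp
        _ ≤ ε * Real.sqrt n := this
    calc 3 * (m:ℝ) * Real.sqrt n ≤ (ε * Real.sqrt n) * Real.sqrt n :=
          mul_le_mul_of_nonneg_right h4 (Real.sqrt_nonneg n)
      _ = ε * (Real.sqrt n * Real.sqrt n) := by ring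
      _ = ε * n := by rw [Real.mul_self_sqrt hnpos.le]
  linarith

end SanovAux

/-- **Sanov consequence for tests on types** (inequality (15) in the fixed-weight
converse): if `E_n = Σ_q (1-g_n(q)) P_{P1ⁿ}(type = q)` satisfies `E_n ≤ 2^{-n(λ-δ)}`
for all large `n` (i.e. `-(1/n) log₂ E_n ≥ λ-δ`), then for all large `n` every type of a
length-`n` string lying in `B_KL(P1, λ-2δ)` satisfies `1 - g_n(q) ≤ 2^{-nδ/2}`. -/
theorem sanov_test_on_types {𝒳 : Type*} [Fintype 𝒳] [DecidableEq 𝒳] [Nonempty 𝒳]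
    (P1 : 𝒳 → ℝ) (hP1 : P1 ∈ simplex 𝒳) (hfs1 : ∀ x, 0 < P1 x)
    {lam δ : ℝ} (hδ : 0 < δ) (hlam : 2 * δ < lam)
    (g : (n : ℕ) → (𝒳 → ℝ) → ℝ)
    (hg : ∀ (n : ℕ) (x : Fin n → 𝒳), g n (typeOf x) ∈ Set.Icc (0:ℝ) 1)
    (hE : ∃ N : ℕ, ∀ n > N,
      (∑ x : Fin n → 𝒳, iid P1 x * (1 - g n (typeOf x))) ≤
        (2 : ℝ) ^ (-(n : ℝ) * (lam - δ))) :
    ∃ N' : ℕ, ∀ n > N', ∀ x : Fin n → 𝒳,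
      KL2 (typeOf x) P1 ≤ ENNReal.ofReal (lam - 2 * δ) →
        1 - g n (typeOf x) ≤ (2 : ℝ) ^ (-(n : ℝ) * δ / 2) := by

  classical
  obtain ⟨N, hN⟩ := hE
  set m := Fintype.card 𝒳 with hm
  have hl2 : (0:ℝ) < Real.log 2 := Real.log_pos (by norm_num)
  set ε := δ * Real.log 2 / 2 with hεdef
  have hεpos : 0 < ε := by positivity
  refine ⟨N + Nat.ceil ((3 * (m:ℝ) / ε)^2) + 1, ?_⟩
  intro n hn x hKL
  have hn1 : 1 ≤ n := by omega
  have hn0 : 0 < n := hn1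
  have hnN : n > N := by omega
  have hnR : (0:ℝ) < n := by exact_mod_cast hn0
  have hnbig : ((3 * (m:ℝ) / ε)^2 : ℝ) ≤ n := by
    have h1 : Nat.ceil (((3 * (m:ℝ) / ε)^2 : ℝ)) ≤ n := by omega
    calc ((3 * (m:ℝ) / ε)^2 : ℝ) ≤ (Nat.ceil (((3 * (m:ℝ) / ε)^2 : ℝ)) : ℝ) := Nat.le_ceil _
      _ ≤ n := by exact_mod_cast h1
  set D := ∑ a, typeOf x a * Real.logb 2 (typeOf x a / P1 a) with hDdef
  have hDle : D ≤ lam - 2 * δ := by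
    rw [KL2, if_pos (fun a h => absurd h (hfs1 a).ne')] at hKL
    exact (ENNReal.ofReal_le_ofReal_iff (by linarith)).mp hKL
  have hc0 : 0 ≤ 1 - g n (typeOf x) := by have := (hg n x).2; linarith
  have hmain := SanovAux.main_lower hn0 P1 hfs1 x
  have hsum := SanovAux.sum_lower hn0 P1 hfs1 (g n) (hg n) x
  have hEn := hN n hnN
  have hrpow : (2:ℝ) ^ (-(n:ℝ) * (lam - δ)) = Real.exp (Real.log 2 * (-(n:ℝ) * (lam - δ))) :=
    Real.rpow_def_of_pos (by norm_num) _
  have step1 : (1 - g n (typeOf x)) * Real.exp (-((n:ℝ) * D) * Real.log 2)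
      ≤ (Real.exp 1 * n)^m * Real.exp (Real.log 2 * (-(n:ℝ) * (lam - δ))) := by
    calc (1 - g n (typeOf x)) * Real.exp (-((n:ℝ) * D) * Real.log 2)
        ≤ (1 - g n (typeOf x)) * ((Real.exp 1 * n)^m *
            ((((Finset.univ.filter fun y : Fin n → 𝒳 => typeOf y = typeOf x).card : ℕ) : ℝ)
              * ∏ a, P1 a ^ SanovAux.cnt x a)) := mul_le_mul_of_nonneg_left hmain hc0
      _ = (Real.exp 1 * n)^m * ((1 - g n (typeOf x)) *
            ((((Finset.univ.filter fun y : Fin n → 𝒳 => typeOf y = typeOf x).card : ℕ) : ℝ)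
              * ∏ a, P1 a ^ SanovAux.cnt x a)) := by ring
      _ ≤ (Real.exp 1 * n)^m * (∑ x' : Fin n → 𝒳, iid P1 x' * (1 - g n (typeOf x'))) :=
          mul_le_mul_of_nonneg_left hsum (by positivity)
      _ ≤ (Real.exp 1 * n)^m * ((2:ℝ) ^ (-(n:ℝ) * (lam - δ))) :=
          mul_le_mul_of_nonneg_left hEn (by positivity)
      _ = _ := by rw [hrpow]
  have step2 : 1 - g n (typeOf x) ≤ (Real.exp 1 * n)^m
      * Real.exp (Real.log 2 * (-(n:ℝ) * (lam - δ)) + ((n:ℝ) * D) * Real.log 2) := by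
    calc 1 - g n (typeOf x)
        = (1 - g n (typeOf x)) * Real.exp (-((n:ℝ) * D) * Real.log 2)
            * Real.exp (((n:ℝ) * D) * Real.log 2) := by
          rw [mul_assoc, ← Real.exp_add]; simp
      _ ≤ ((Real.exp 1 * n)^m * Real.exp (Real.log 2 * (-(n:ℝ) * (lam - δ))))
            * Real.exp (((n:ℝ) * D) * Real.log 2) :=
          mul_le_mul_of_nonneg_right step1 (Real.exp_pos _).le
      _ = _ := by rw [mul_assoc, ← Real.exp_add]
  have step3 : 1 - g n (typeOf x) ≤ (Real.exp 1 * n)^m * Real.exp (-((n:ℝ) * δ) * Real.log 2) := by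
    refine step2.trans (mul_le_mul_of_nonneg_left (Real.exp_le_exp.mpr ?_) (by positivity))
    have hD2 : (n:ℝ) * D * Real.log 2 ≤ (n:ℝ) * (lam - 2*δ) * Real.log 2 := by
      apply mul_le_mul_of_nonneg_right _ hl2.le
      exact mul_le_mul_of_nonneg_left hDle hnR.le
    have hring : Real.log 2 * (-(n:ℝ) * (lam - δ)) + (n:ℝ) * (lam - 2*δ) * Real.log 2
        = -((n:ℝ) * δ) * Real.log 2 := by ring
    linarith
  have hgrow := SanovAux.growth hεpos hn1 hnbig
  have final : (Real.exp 1 * n)^m * Real.exp (-((n:ℝ) * δ) * Real.log 2)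
      ≤ (2:ℝ) ^ (-(n:ℝ) * δ / 2) := by
    rw [Real.rpow_def_of_pos (by norm_num : (0:ℝ) < 2)]
    calc (Real.exp 1 * n)^m * Real.exp (-((n:ℝ) * δ) * Real.log 2)
        ≤ Real.exp (ε * n) * Real.exp (-((n:ℝ) * δ) * Real.log 2) :=
          mul_le_mul_of_nonneg_right hgrow (Real.exp_pos _).le
      _ = Real.exp (ε * n + -((n:ℝ) * δ) * Real.log 2) := (Real.exp_add _ _).symm
      _ = Real.exp (Real.log 2 * (-(n:ℝ) * δ / 2)) := by rw [hεdef]; congr 1; ring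
  exact step3.trans final

end
end
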